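/- Every arithmetic differential operator f : Z_p → Z_p of order m is an analytic function of level m; i.e., if f(a) = F(a, δa, ..., δ^m a) for a restricted power series F ∈ Z_p[[x_0,...,x_m]], then for every a ∈ Z_p there is a restricted power series F_a ∈ Z_p[[x]] with f(a + p^m u) = F_a(u) for all u ∈ Z_p. -/

import Mathlib

open Filter

variable {p : ℕ} [Fact p.Prime]

/-- A multivariate power series over `ℤ_[p]` is restricted if its coefficients
tend to `0` `p`-adically as the total degree of the index tends to infinity
(equivalently, along the cofinite filter on indices). -/
def MvRestricted {k : ℕ} (F : MvPowerSeries (Fin k) ℤ_[p]) : Prop :=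
  Tendsto (fun α : Fin k →₀ ℕ => MvPowerSeries.coeff α F) cofinite (nhds 0)

/-- Evaluation of a (restricted) multivariate power series at a tuple of
`p`-adic integers. -/
noncomputable def mvEval {k : ℕ} (F : MvPowerSeries (Fin k) ℤ_[p])
    (x : Fin k → ℤ_[p]) : ℤ_[p] :=
  ∑' α : Fin k →₀ ℕ, MvPowerSeries.coeff α F * ∏ i : Fin k, x i ^ α i

/-- A one-variable power series over `ℤ_[p]` is restricted if its
coefficients tend to `0` `p`-adically. -/
def PRestricted (F : PowerSeries ℤ_[p]) : Prop :=
  Tendsto (fun n : ℕ => PowerSeries.coeff n F) atTop (nhds 0)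

/-- Evaluation of a (restricted) one-variable power series at a `p`-adic
integer. -/
noncomputable def pEval (F : PowerSeries ℤ_[p]) (u : ℤ_[p]) : ℤ_[p] :=
  ∑' n : ℕ, PowerSeries.coeff n F * u ^ n

/-- `f` is an arithmetic differential operator of order `m` (relative to the
Fermat quotient operator `δ`) if it is given by a restricted power series in
`a, δa, ..., δ^m a`. -/
def IsADO (δ : ℤ_[p] → ℤ_[p]) (m : ℕ) (f : ℤ_[p] → ℤ_[p]) : Prop :=
  ∃ F : MvPowerSeries (Fin (m + 1)) ℤ_[p], MvRestricted F ∧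
    ∀ a : ℤ_[p], f a = mvEval F (fun i : Fin (m + 1) => δ^[(i : ℕ)] a)

/-- `f` is analytic of level `m` if on every disc `a + p^m ℤ_[p]` it is given
by a restricted power series in `u`, where `x = a + p^m u`. -/
def IsAnalyticLevel (m : ℕ) (f : ℤ_[p] → ℤ_[p]) : Prop :=
  ∀ a : ℤ_[p], ∃ F : PowerSeries ℤ_[p], PRestricted F ∧
    ∀ u : ℤ_[p], f (a + (p : ℤ_[p]) ^ m * u) = pEval F u

namespace AdoAux

/-- Summability criterion in `ℤ_[p]`. -/
lemma psummable {ι : Type*} {g : ι → ℤ_[p]} (h : Tendsto g cofinite (nhds 0)) :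
    Summable g :=
  NonarchimedeanAddGroup.summable_of_tendsto_cofinite_zero h

lemma norm_tsum_le {ι : Type*} (g : ι → ℤ_[p]) {C : ℝ} (hC : 0 ≤ C)
    (h : ∀ i, ‖g i‖ ≤ C) : ‖∑' i, g i‖ ≤ C :=
  IsUltrametricDist.norm_tsum_le_of_forall_le_of_nonneg hC h

lemma dominated_summable {ι : Type*} {g h : ι → ℤ_[p]}
    (hg : Tendsto g cofinite (nhds 0)) (hb : ∀ i, ‖h i‖ ≤ ‖g i‖) : Summable h := by
  refine psummable (squeeze_zero_norm hb ?_)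
  simpa using hg.norm

lemma norm_mul_le_left (x y : ℤ_[p]) : ‖x * y‖ ≤ ‖x‖ :=
  (norm_mul_le x y).trans (by
    calc ‖x‖ * ‖y‖ ≤ ‖x‖ * 1 := by
          exact mul_le_mul_of_nonneg_left (PadicInt.norm_le_one y) (norm_nonneg x)
      _ = ‖x‖ := mul_one _)

open Polynomial in
/-- Binomial/Frobenius divisibility lemma. -/
lemma key_dvd (c : ℤ_[p]) (k : ℕ) (hk : 1 ≤ k) :
    ∃ W : Polynomial ℤ_[p],
      (C c + C ((p : ℤ_[p]) ^ k) * X) ^ p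
        = C (c ^ p) + C ((p : ℤ_[p]) ^ (k + 1)) * W := by
  have hp : p.Prime := Fact.out
  have hdvd : (C ((p : ℤ_[p]) ^ (k + 1)) : Polynomial ℤ_[p]) ∣
      (C c + C ((p : ℤ_[p]) ^ k) * X) ^ p - C (c ^ p) := by
    rw [add_pow, Finset.sum_range_succ]
    have hlast : (C c) ^ p * (C ((p : ℤ_[p]) ^ k) * X) ^ (p - p) *
        (p.choose p : Polynomial ℤ_[p]) = C (c ^ p) := by
      rw [Nat.sub_self, pow_zero, mul_one, Nat.choose_self, Nat.cast_one, mul_one, C_pow]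
    rw [hlast, add_sub_cancel_right]
    apply Finset.dvd_sum
    intro j hj
    rw [Finset.mem_range] at hj
    have hCsplit : (C ((p : ℤ_[p]) ^ (k + 1)) : Polynomial ℤ_[p])
        = C ((p : ℤ_[p]) ^ k) * C ((p : ℤ_[p])) := by
      rw [← C_mul, ← pow_succ]
    rcases Nat.eq_zero_or_pos j with rfl | hjpos
    · -- term is (C c)^0 * (C p^k * X)^p * 1 ; use p^(k+1) ∣ p^(k*p)
      have h1 : (C ((p : ℤ_[p]) ^ (k + 1)) : Polynomial ℤ_[p]) ∣
          (C ((p : ℤ_[p]) ^ k)) ^ (p - 0) := by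
        rw [← C_pow, ← pow_mul]
        apply _root_.map_dvd C
        apply pow_dvd_pow _
        have h2 : 2 ≤ p := hp.two_le
        calc k + 1 ≤ k + k := by omega
          _ = k * 2 := by ring
          _ ≤ k * (p - 0) := by
              apply Nat.mul_le_mul_left; omega
      have h2 : ((C ((p : ℤ_[p]) ^ k)) : Polynomial ℤ_[p]) ^ (p - 0) ∣
          (C ((p : ℤ_[p]) ^ k) * X) ^ (p - 0) :=
        pow_dvd_pow_of_dvd (dvd_mul_right _ _) _
      exact ((h1.trans h2).mul_left _).mul_right _
    · -- 1 ≤ j < p : use p ∣ choose and p^k ∣ (C p^k * X)^(p-j)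
      have h1 : (C ((p : ℤ_[p]) ^ k) : Polynomial ℤ_[p]) ∣
          (C ((p : ℤ_[p]) ^ k) * X) ^ (p - j) :=
        dvd_pow (dvd_mul_right _ _) (by omega)
      have h2 : (C ((p : ℤ_[p])) : Polynomial ℤ_[p]) ∣
          (p.choose j : Polynomial ℤ_[p]) := by
        rw [← C_eq_natCast]
        exact _root_.map_dvd C (Nat.cast_dvd_cast (Nat.Prime.dvd_choose_self hp (by omega) hj))
      rw [hCsplit, mul_assoc]
      exact (mul_dvd_mul h1 h2).mul_left _
  obtain ⟨W, hW⟩ := hdvd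
  exact ⟨W, by linear_combination hW⟩

open Polynomial in
lemma delta_step (δ : ℤ_[p] → ℤ_[p]) (hδ : ∀ x : ℤ_[p], (p : ℤ_[p]) * δ x = x - x ^ p)
    (c : ℤ_[p]) (k : ℕ) (hk : 1 ≤ k) (Q : Polynomial ℤ_[p]) :
    ∃ Q' : Polynomial ℤ_[p], ∀ u : ℤ_[p],
      δ (c + (p : ℤ_[p]) ^ k * Q.eval u)
        = δ c + (p : ℤ_[p]) ^ (k - 1) * Q'.eval u := by
  obtain ⟨W, hW⟩ := key_dvd c k hk
  refine ⟨Q - C ((p : ℤ_[p])) * (W.comp Q), fun u => ?_⟩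
  have hp : p.Prime := Fact.out
  have hpne : ((p : ℕ) : ℤ_[p]) ≠ 0 := Nat.cast_ne_zero.mpr hp.ne_zero
  apply mul_left_cancel₀ hpne
  rw [hδ]
  set q := Q.eval u with hq
  have hx : (c + (p : ℤ_[p]) ^ k * q) ^ p
      = c ^ p + (p : ℤ_[p]) ^ (k + 1) * W.eval q := by
    have h := congrArg (Polynomial.eval q) hW
    simpa using h
  have hQ' : (Q - C ((p : ℤ_[p])) * (W.comp Q)).eval u
      = q - (p : ℤ_[p]) * W.eval q := by
    simp [Polynomial.eval_comp, ← hq]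
  have hpk : (p : ℤ_[p]) * (p : ℤ_[p]) ^ (k - 1) = (p : ℤ_[p]) ^ k := by
    conv_rhs => rw [show k = (k - 1) + 1 by omega]
    rw [pow_succ]; ring
  rw [hx, hQ', mul_add, ← mul_assoc, hpk, hδ c]
  ring

lemma delta_iter (δ : ℤ_[p] → ℤ_[p]) (hδ : ∀ x : ℤ_[p], (p : ℤ_[p]) * δ x = x - x ^ p)
    (m : ℕ) (a : ℤ_[p]) :
    ∀ i, i ≤ m → ∃ Q : Polynomial ℤ_[p], ∀ u : ℤ_[p],
      δ^[i] (a + (p : ℤ_[p]) ^ m * u)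
        = δ^[i] a + (p : ℤ_[p]) ^ (m - i) * Q.eval u := by
  intro i
  induction i with
  | zero =>
    intro _
    exact ⟨Polynomial.X, fun u => by simp⟩
  | succ i ih =>
    intro hi
    obtain ⟨Q, hQ⟩ := ih (by omega)
    obtain ⟨Q', hQ'⟩ := delta_step δ hδ (δ^[i] a) (m - i) (by omega) Q
    refine ⟨Q', fun u => ?_⟩
    rw [Function.iterate_succ_apply', hQ u, hQ' u,
      Function.iterate_succ_apply', Nat.sub_sub]

end AdoAux

/-- Every arithmetic differential operator of order `m` is an analytic
function of level `m`. -/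
theorem ado_is_analytic (p : ℕ) [Fact p.Prime]
    (δ : ℤ_[p] → ℤ_[p]) (hδ : ∀ x : ℤ_[p], (p : ℤ_[p]) * δ x = x - x ^ p)
    (m : ℕ) (f : ℤ_[p] → ℤ_[p]) (hf : IsADO δ m f) :
    IsAnalyticLevel m f := by
  classical
  obtain ⟨F, hFres, hFeq⟩ := hf
  intro a
  have hR : ∀ i : Fin (m + 1), ∃ R : Polynomial ℤ_[p], ∀ u : ℤ_[p],
      δ^[(i : ℕ)] (a + (p : ℤ_[p]) ^ m * u) = R.eval u := by
    intro i
    obtain ⟨Q, hQ⟩ := AdoAux.delta_iter δ hδ m a i (Nat.lt_succ_iff.mp i.isLt)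
    refine ⟨Polynomial.C (δ^[(i : ℕ)] a) + Polynomial.C ((p : ℤ_[p]) ^ (m - (i : ℕ))) *
      Q, fun u => by simp [hQ u]⟩
  choose R hRe using hR
  set Pa : (Fin (m + 1) →₀ ℕ) → Polynomial ℤ_[p] :=
    fun α => ∏ i : Fin (m + 1), (R i) ^ (α i) with hPa
  set Dbound : (Fin (m + 1) →₀ ℕ) → ℕ :=
    fun α => ∑ i : Fin (m + 1), (α i) * (R i).natDegree with hDbound
  have hcoeff0 : ∀ α (n : ℕ), Dbound α < n → (Pa α).coeff n = 0 := by
    intro α n hn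
    apply Polynomial.coeff_eq_zero_of_natDegree_lt
    calc (Pa α).natDegree ≤ ∑ i : Fin (m + 1), ((R i) ^ (α i)).natDegree :=
          Polynomial.natDegree_prod_le _ _
      _ ≤ Dbound α := Finset.sum_le_sum fun i _ => Polynomial.natDegree_pow_le
      _ < n := hn
  have hnorm1 : ∀ (α : Fin (m + 1) →₀ ℕ) (x : ℤ_[p]),
      ‖MvPowerSeries.coeff α F * x‖ ≤ ‖MvPowerSeries.coeff α F‖ :=
    fun α x => AdoAux.norm_mul_le_left _ _
  set G : PowerSeries ℤ_[p] :=
    PowerSeries.mk (fun n => ∑' α, MvPowerSeries.coeff α F * (Pa α).coeff n)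
    with hG
  have hGc : ∀ n, PowerSeries.coeff n G
      = ∑' α, MvPowerSeries.coeff α F * (Pa α).coeff n := by
    intro n; simp [hG]
  have hsum1 : ∀ n, Summable fun α => MvPowerSeries.coeff α F * (Pa α).coeff n :=
    fun n => AdoAux.dominated_summable hFres fun α => hnorm1 α _
  have hsum2 : ∀ u : ℤ_[p], Summable
      (Function.uncurry fun (α : Fin (m + 1) →₀ ℕ) (n : ℕ) =>
        MvPowerSeries.coeff α F * ((Pa α).coeff n * u ^ n)) := by
    intro u
    apply AdoAux.psummable
    rw [NormedAddCommGroup.tendsto_nhds_zero]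
    intro ε hε
    rw [Filter.eventually_cofinite]
    have hS : {α : Fin (m + 1) →₀ ℕ | ¬ ‖MvPowerSeries.coeff α F‖ < ε}.Finite := by
      have h1 := NormedAddCommGroup.tendsto_nhds_zero.mp hFres ε hε
      exact Filter.eventually_cofinite.mp h1
    apply Set.Finite.subset (Set.Finite.prod hS (Set.finite_Iic (hS.toFinset.sup Dbound)))
    rintro ⟨α, n⟩ hbad
    simp only [Set.mem_setOf_eq, Function.uncurry] at hbad
    have hα : α ∈ {α : Fin (m + 1) →₀ ℕ | ¬ ‖MvPowerSeries.coeff α F‖ < ε} := by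
      intro hlt
      exact hbad (lt_of_le_of_lt (hnorm1 α _) hlt)
    refine Set.mem_prod.mpr ⟨hα, Set.mem_Iic.mpr ?_⟩
    have hn : n ≤ Dbound α := by
      by_contra hn
      apply hbad
      rw [hcoeff0 α n (by omega)]
      simpa using hε
    exact le_trans hn (Finset.le_sup (hS.mem_toFinset.mpr hα))
  have hGres : PRestricted G := by
    rw [PRestricted, NormedAddCommGroup.tendsto_nhds_zero]
    intro ε hε
    have hε2 : (0 : ℝ) < ε / 2 := by positivity
    have hS : {α : Fin (m + 1) →₀ ℕ |
        ¬ ‖MvPowerSeries.coeff α F‖ < ε / 2}.Finite := by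
      have h1 := NormedAddCommGroup.tendsto_nhds_zero.mp hFres (ε / 2) hε2
      exact Filter.eventually_cofinite.mp h1
    rw [Filter.eventually_atTop]
    refine ⟨hS.toFinset.sup Dbound + 1, fun n hn => ?_⟩
    rw [hGc n]
    have hbound : ∀ α, ‖MvPowerSeries.coeff α F * (Pa α).coeff n‖ ≤ ε / 2 := by
      intro α
      by_cases hα : ‖MvPowerSeries.coeff α F‖ < ε / 2
      · exact le_trans (hnorm1 α _) (le_of_lt hα)
      · have hmem : α ∈ hS.toFinset := hS.mem_toFinset.mpr hα
        have hd : Dbound α ≤ hS.toFinset.sup Dbound := Finset.le_sup hmem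
        rw [hcoeff0 α n (by omega)]
        simp [le_of_lt hε2]
    calc ‖∑' α, MvPowerSeries.coeff α F * (Pa α).coeff n‖ ≤ ε / 2 :=
          AdoAux.norm_tsum_le _ (le_of_lt hε2) hbound
      _ < ε := by linarith
  refine ⟨G, hGres, fun u => ?_⟩
  rw [hFeq (a + (p : ℤ_[p]) ^ m * u), mvEval]
  simp only [hRe]
  have hprod : ∀ α : Fin (m + 1) →₀ ℕ,
      (∏ i : Fin (m + 1), (Polynomial.eval u (R i)) ^ (α i)) = (Pa α).eval u := by
    intro α
    rw [hPa]
    simp [Polynomial.eval_prod]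
  have hpoly : ∀ α : Fin (m + 1) →₀ ℕ,
      (Pa α).eval u = ∑' n : ℕ, (Pa α).coeff n * u ^ n := by
    intro α
    rw [tsum_eq_sum (s := Finset.range ((Pa α).natDegree + 1))
      (f := fun n => (Pa α).coeff n * u ^ n)
      (fun n hn => by
        rw [Finset.mem_range, not_lt] at hn
        show (Pa α).coeff n * u ^ n = 0
        rw [Polynomial.coeff_eq_zero_of_natDegree_lt (by omega), zero_mul])]
    exact Polynomial.eval_eq_sum_range u
  calc ∑' α, MvPowerSeries.coeff α F * ∏ i : Fin (m + 1),
        (Polynomial.eval u (R i)) ^ (α i)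
      = ∑' α, MvPowerSeries.coeff α F * ∑' n : ℕ, (Pa α).coeff n * u ^ n := by
        refine tsum_congr fun α => ?_
        rw [hprod α, hpoly α]
    _ = ∑' α, ∑' n : ℕ, MvPowerSeries.coeff α F * ((Pa α).coeff n * u ^ n) := by
        refine tsum_congr fun α => ?_
        refine (Summable.tsum_mul_left _ ?_).symm
        exact summable_of_ne_finset_zero (s := Finset.range (Dbound α + 1))
          (fun n hn => by
            rw [Finset.mem_range, not_lt] at hn
            show (Pa α).coeff n * u ^ n = 0
            rw [hcoeff0 α n (by omega), zero_mul])
    _ = ∑' n : ℕ, ∑' α, MvPowerSeries.coeff α F * ((Pa α).coeff n * u ^ n) :=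
        (Summable.tsum_comm (hsum2 u)).symm
    _ = ∑' n : ℕ, (∑' α, MvPowerSeries.coeff α F * (Pa α).coeff n) * u ^ n := by
        refine tsum_congr fun n => ?_
        rw [← Summable.tsum_mul_right _ (hsum1 n)]
        exact tsum_congr fun α => by ring
    _ = pEval G u := by
        rw [pEval]
        exact tsum_congr fun n => by rw [hGc n]
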